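/- Suppose for i,j ∈ {1,2,3}, δ_ij ∈ (0,1) and k̂_ij ∈ ℂ satisfy δ_ij² = 1 - |k̂_ij|², with k̂_ij ≠ 0. Then the inequality |δ_12 - δ_13|/(1 - δ_12 δ_13) ≤ δ_23 ≤ (δ_12 + δ_13)/(1 + δ_12 δ_13) is equivalent to |1 - |k̂_21 k̂_13 / k̂_23|| ≤ δ_12 δ_13. -/

import Mathlib

/-- Equivalence of the strengthened triangle inequality for the `δ`'s with a Gram-entry
inequality: given `δ_ij ∈ (0,1)` and nonzero normalized kernel entries `k̂_ij` with
`δ_ij² = 1 - |k̂_ij|²`, the inequality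
`|δ₁₂-δ₁₃|/(1-δ₁₂δ₁₃) ≤ δ₂₃ ≤ (δ₁₂+δ₁₃)/(1+δ₁₂δ₁₃)` holds iff
`|1 - |k̂₂₁k̂₁₃/k̂₂₃|| ≤ δ₁₂δ₁₃`. -/
theorem sti_iff_gram (δ12 δ13 δ23 : ℝ) (k21 k13 k23 : ℂ)
    (h12 : 0 < δ12) (h12' : δ12 < 1) (h13 : 0 < δ13) (h13' : δ13 < 1)
    (h23 : 0 < δ23) (h23' : δ23 < 1)
    (hk21 : k21 ≠ 0) (hk13 : k13 ≠ 0) (hk23 : k23 ≠ 0)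
    (e12 : δ12 ^ 2 = 1 - ‖k21‖ ^ 2)
    (e13 : δ13 ^ 2 = 1 - ‖k13‖ ^ 2)
    (e23 : δ23 ^ 2 = 1 - ‖k23‖ ^ 2) :
    (|δ12 - δ13| / (1 - δ12 * δ13) ≤ δ23 ∧ δ23 ≤ (δ12 + δ13) / (1 + δ12 * δ13)) ↔
      |1 - ‖k21 * k13 / k23‖| ≤ δ12 * δ13 := by
  set a := ‖k21‖ with ha
  set b := ‖k13‖ with hb
  set c := ‖k23‖ with hc
  have hA : 0 < a := norm_pos_iff.mpr hk21
  have hB : 0 < b := norm_pos_iff.mpr hk13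
  have hC : 0 < c := norm_pos_iff.mpr hk23
  have hd1 : 0 < 1 - δ12 * δ13 := by nlinarith
  have hd2 : 0 < 1 + δ12 * δ13 := by nlinarith
  have habs : ‖k21 * k13 / k23‖ = a * b / c := by
    rw [norm_div, norm_mul]
  rw [habs, abs_le]
  have key : (-(δ12 * δ13) ≤ 1 - a * b / c ∧ 1 - a * b / c ≤ δ12 * δ13) ↔
      (a * b ≤ (1 + δ12 * δ13) * c ∧ (1 - δ12 * δ13) * c ≤ a * b) := by
    rw [← div_le_iff₀ hC, ← le_div_iff₀ hC]
    constructor <;> rintro ⟨u, v⟩ <;> constructor <;> linarith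
  rw [key, div_le_iff₀ hd1, le_div_iff₀ hd2]
  have hab2 : a ^ 2 * b ^ 2 = (1 - δ12 ^ 2) * (1 - δ13 ^ 2) := by
    rw [show a ^ 2 = 1 - δ12 ^ 2 by linarith, show b ^ 2 = 1 - δ13 ^ 2 by linarith]
  have hc2 : c ^ 2 = 1 - δ23 ^ 2 := by linarith
  have hcc1 : c ^ 2 * (1 - δ12 * δ13) ^ 2 = (1 - δ23 ^ 2) * (1 - δ12 * δ13) ^ 2 := by
    rw [hc2]
  have hcc2 : c ^ 2 * (1 + δ12 * δ13) ^ 2 = (1 - δ23 ^ 2) * (1 + δ12 * δ13) ^ 2 := by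
    rw [hc2]
  have sq_iff : ∀ x y : ℝ, 0 ≤ x → 0 ≤ y → (x ≤ y ↔ x ^ 2 ≤ y ^ 2) := by
    intro x y hx hy
    exact (pow_le_pow_iff_left₀ hx hy two_ne_zero).symm
  have i1 : |δ12 - δ13| ≤ δ23 * (1 - δ12 * δ13) ↔
      (δ12 - δ13) ^ 2 ≤ (δ23 * (1 - δ12 * δ13)) ^ 2 := by
    rw [sq_iff _ _ (abs_nonneg _) (by positivity), sq_abs]
  have i2 : δ23 * (1 + δ12 * δ13) ≤ δ12 + δ13 ↔
      (δ23 * (1 + δ12 * δ13)) ^ 2 ≤ (δ12 + δ13) ^ 2 := by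
    rw [sq_iff _ _ (by positivity) (by positivity)]
  have i3 : a * b ≤ (1 + δ12 * δ13) * c ↔ (a * b) ^ 2 ≤ ((1 + δ12 * δ13) * c) ^ 2 := by
    rw [sq_iff _ _ (by positivity) (by positivity)]
  have i4 : (1 - δ12 * δ13) * c ≤ a * b ↔ ((1 - δ12 * δ13) * c) ^ 2 ≤ (a * b) ^ 2 := by
    rw [sq_iff _ _ (by positivity) (by positivity)]
  rw [i1, i2, i3, i4]
  constructor <;> rintro ⟨u, v⟩ <;>
    exact ⟨by linarith [hab2, hcc1, hcc2], by linarith [hab2, hcc1, hcc2]⟩
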